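/- There is a join-preserving embedding of the lattice M_{2^{ℵ₀}} into the lattice Cll(X) of local clones on a countably infinite set X: there exists a family (𝒞_i)_{i ∈ 2^{ℵ₀}} of pairwise distinct local clones on X, each properly containing the clone J of projections and properly contained in the clone O of all operations, such that for all i ≠ j the smallest local clone containing 𝒞_i ∪ 𝒞_j is O. (Explicitly, one may take 𝒞_i = Pol({A_i}) where (A_i)_{i ∈ 2^{ℵ₀}} enumerates the nonempty proper subsets of X.) -/

import Mathlib

/-- A finitary operation on `X`: an `(n+1)`-ary function `X^(n+1) → X` (arities are ≥ 1). -/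
abbrev FinOp (X : Type) := Σ n : ℕ, (Fin (n + 1) → X) → X

/-- A finitary relation on `X`: an `(m+1)`-ary relation `ρ ⊆ X^(m+1)` (arities are ≥ 1). -/
abbrev FinRel (X : Type) := Σ m : ℕ, Set (Fin (m + 1) → X)

variable {X : Type}

/-- `C` is a clone: it contains all projections and is closed under composition. -/
def IsClone (C : Set (FinOp X)) : Prop :=
  (∀ (n : ℕ) (k : Fin (n + 1)), (⟨n, fun x => x k⟩ : FinOp X) ∈ C) ∧
  (∀ (n m : ℕ) (f : (Fin (n + 1) → X) → X) (g : Fin (n + 1) → (Fin (m + 1) → X) → X),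
    (⟨n, f⟩ : FinOp X) ∈ C → (∀ i, (⟨m, g i⟩ : FinOp X) ∈ C) →
    (⟨m, fun x => f fun i => g i x⟩ : FinOp X) ∈ C)

/-- `C` is a local clone: a clone each of whose `n`-ary fragments is closed in the
product topology on `X^(X^n)`, where `X` carries the discrete topology. -/
def IsLocalClone (C : Set (FinOp X)) : Prop :=
  IsClone C ∧
  ∀ n : ℕ,
    letI : TopologicalSpace X := ⊥
    IsClosed {f : (Fin (n + 1) → X) → X | (⟨n, f⟩ : FinOp X) ∈ C}

/-- The smallest local clone containing `F` (the local clone generated by `F`). -/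
def cllClosure (F : Set (FinOp X)) : Set (FinOp X) :=
  ⋂₀ {C : Set (FinOp X) | IsLocalClone C ∧ F ⊆ C}

/-- `f` preserves the relation `ρ`. -/
def Preserves {n m : ℕ} (f : (Fin (n + 1) → X) → X) (ρ : Set (Fin (m + 1) → X)) : Prop :=
  ∀ r : Fin (n + 1) → Fin (m + 1) → X, (∀ i, r i ∈ ρ) → (fun j => f fun i => r i j) ∈ ρ

/-- `Pol R`: all finitary operations preserving every relation in `R`. -/
def Polymorphisms (R : Set (FinRel X)) : Set (FinOp X) :=
  {f | ∀ ρ ∈ R, Preserves f.2 ρ.2}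

/-- `Inv F`: all finitary relations invariant under every operation in `F`. -/
def Invariants (F : Set (FinOp X)) : Set (FinRel X) :=
  {ρ | ∀ f ∈ F, Preserves f.2 ρ.2}

/-- The clone of projections. -/
def projClone (X : Type) : Set (FinOp X) :=
  {f | ∃ k : Fin (f.1 + 1), f.2 = fun x => x k}

/-- `Pol({A})`: all finitary operations on `X` preserving the unary relation `A`. -/
def unaryPol {X : Type} (A : Set X) : Set (FinOp X) :=
  Polymorphisms {(⟨0, {x | x 0 ∈ A}⟩ : FinRel X)}

lemma mem_unaryPol {A : Set X} {n : ℕ} {f : (Fin (n+1) → X) → X} :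
    (⟨n, f⟩ : FinOp X) ∈ unaryPol A ↔ ∀ x : Fin (n+1) → X, (∀ i, x i ∈ A) → f x ∈ A := by
  constructor
  · intro h x hx
    have := h ⟨0, {x | x 0 ∈ A}⟩ rfl (fun i _ => x i) (fun i => hx i)
    simpa using this
  · intro h ρ hρ r hr
    rw [Set.mem_singleton_iff] at hρ
    subst hρ
    exact h (fun i => r i 0) (fun i => hr i)

lemma isLocalClone_unaryPol (A : Set X) : IsLocalClone (unaryPol A) := by
  refine ⟨⟨fun n k => mem_unaryPol.mpr fun x hx => hx k, ?_⟩, ?_⟩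
  · intro n m f g hf hg
    refine mem_unaryPol.mpr fun x hx => ?_
    exact mem_unaryPol.mp hf _ (fun i => mem_unaryPol.mp (hg i) x hx)
  · intro n
    letI : TopologicalSpace X := ⊥
    haveI : DiscreteTopology X := ⟨rfl⟩
    show IsClosed {f : (Fin (n + 1) → X) → X | (⟨n, f⟩ : FinOp X) ∈ unaryPol A}
    have hset : {f : (Fin (n+1) → X) → X | (⟨n, f⟩ : FinOp X) ∈ unaryPol A}
        = ⋂ x ∈ {x : Fin (n+1) → X | ∀ i, x i ∈ A}, {f : (Fin (n+1) → X) → X | f x ∈ A} := by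
      ext f
      simp [mem_unaryPol]
    rw [hset]
    exact isClosed_biInter fun x _ => (isClosed_discrete A).preimage (continuous_apply x)

lemma constOp_mem {A : Set X} {a : X} (ha : a ∈ A) (n : ℕ) :
    (⟨n, fun _ => a⟩ : FinOp X) ∈ unaryPol A :=
  mem_unaryPol.mpr fun _ _ => ha

lemma mem_of_constOp {A : Set X} (hA : A.Nonempty) {a : X} {n : ℕ}
    (h : (⟨n, fun _ => a⟩ : FinOp X) ∈ unaryPol A) : a ∈ A := by
  obtain ⟨b, hb⟩ := hA
  exact mem_unaryPol.mp h (fun _ => b) (fun _ => hb)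

/-- key join lemma -/
lemma key {A B : Set X} {a β : X} (ha : a ∈ A) (hab : a ∉ B) (hβ : β ∈ B)
    {C : Set (FinOp X)} (hC : IsClone C) (hA : unaryPol A ⊆ C) (hB : unaryPol B ⊆ C) :
    ∀ f : FinOp X, f ∈ C := by
  classical
  rintro ⟨n, F⟩
  set G : (Fin (n + 2) → X) → X :=
    fun y => if y (Fin.last (n+1)) = a then F (fun i => y i.castSucc) else β with hG
  have hGmem : (⟨n + 1, G⟩ : FinOp X) ∈ C := by
    apply hB
    refine mem_unaryPol.mpr fun y hy => ?_
    have : y (Fin.last (n+1)) ≠ a := fun h => hab (h ▸ hy (Fin.last (n+1)))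
    simp [hG, this, hβ]
  set g : Fin (n + 2) → (Fin (n + 1) → X) → X :=
    Fin.lastCases (fun _ => a) (fun i x => x i) with hg
  have hgmem : ∀ i, (⟨n, g i⟩ : FinOp X) ∈ C := by
    intro i
    induction i using Fin.lastCases with
    | last => simpa [hg] using hA (constOp_mem ha n)
    | cast i => simpa [hg] using hC.1 n i
  have hcomp := hC.2 (n+1) n G g hGmem hgmem
  have heq : (fun x => G fun i => g i x) = F := by
    funext x
    have h1 : g (Fin.last (n+1)) x = a := by simp [hg]
    have h2 : ∀ i : Fin (n+1), g i.castSucc x = x i := by intro i; simp [hg]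
    simp only [hG, h1, h2, if_pos rfl]
    simp
  rwa [heq] at hcomp

lemma projClone_ssubset {A : Set X} [Infinite X] (hA : A.Nonempty) :
    projClone X ⊂ unaryPol A := by
  obtain ⟨a, ha⟩ := hA
  constructor
  · rintro ⟨n, f⟩ ⟨k, hk⟩
    exact mem_unaryPol.mpr fun x hx => by
      have : f = fun x => x k := hk
      rw [this]; exact hx k
  · intro hsub
    have hmem : (⟨0, fun _ => a⟩ : FinOp X) ∈ projClone X := hsub (constOp_mem ha 0)
    obtain ⟨k, hk⟩ := hmem
    obtain ⟨c, hc⟩ := exists_ne a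
    have := congrFun hk (fun _ => c)
    simp at this
    exact hc this.symm

lemma unaryPol_ssubset_univ {A : Set X} (hA : A.Nonempty) (hA' : A ≠ Set.univ) :
    unaryPol A ⊂ Set.univ := by
  rw [Set.ssubset_univ_iff]
  intro h
  obtain ⟨b, hb⟩ := Set.ne_univ_iff_exists_notMem A |>.mp hA'
  exact hb (mem_of_constOp hA (h ▸ Set.mem_univ (⟨0, fun _ => b⟩ : FinOp X)))

lemma unaryPol_inj {A B : Set X} (hA : A.Nonempty) (hB : B.Nonempty)
    (h : unaryPol A = unaryPol B) : A = B := by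
  ext x
  constructor
  · intro hx; exact mem_of_constOp hB (h ▸ constOp_mem hx 0)
  · intro hx; exact mem_of_constOp hA (h.symm ▸ constOp_mem hx 0)

lemma card_ι (X : Type) [Countable X] [Infinite X] :
    Cardinal.mk {B : Set X // B.Nonempty ∧ B ≠ Set.univ} = 2 ^ Cardinal.aleph0 := by
  have hX : Cardinal.mk X = Cardinal.aleph0 := Cardinal.mk_eq_aleph0 X
  apply le_antisymm
  · calc Cardinal.mk {B : Set X // B.Nonempty ∧ B ≠ Set.univ}
        ≤ Cardinal.mk (Set X) := Cardinal.mk_subtype_le _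
      _ = 2 ^ Cardinal.aleph0 := by rw [Cardinal.mk_set, hX]
  · obtain ⟨x0, x1, hne⟩ := exists_pair_ne X
    set Y : Set X := ({x0, x1} : Set X)ᶜ with hY
    haveI : Infinite Y := Set.infinite_coe_iff.mpr ((Set.toFinite {x0, x1}).infinite_compl)
    have hYcard : Cardinal.mk (Set Y) = 2 ^ Cardinal.aleph0 := by
      rw [Cardinal.mk_set, Cardinal.mk_eq_aleph0]
    rw [← hYcard]
    refine Cardinal.mk_le_of_injective (f := fun S : Set Y =>
      (⟨insert x0 (Subtype.val '' S), ⟨x0, Set.mem_insert _ _⟩, ?_⟩ :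
        {B : Set X // B.Nonempty ∧ B ≠ Set.univ})) ?_
    · intro hu
      have : x1 ∈ insert x0 (Subtype.val '' S) := hu ▸ Set.mem_univ x1
      rcases this with h | ⟨y, _, hy⟩
      · exact hne h.symm
      · exact y.2 (by rw [hy]; exact Set.mem_insert_iff.mpr (Or.inr rfl))
    · intro S T hST
      have h1 : insert x0 (Subtype.val '' S) = insert x0 (Subtype.val '' T) :=
        congrArg Subtype.val hST
      have himg : Subtype.val '' S = Subtype.val '' T := by
        ext y
        have hyne : ∀ (U : Set Y), y ∈ Subtype.val '' U → y ≠ x0 := by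
          rintro U ⟨z, _, rfl⟩ h
          exact z.2 (by rw [h]; exact Set.mem_insert _ _)
        constructor
        · intro hy
          have : y ∈ insert x0 (Subtype.val '' T) := h1 ▸ Set.mem_insert_of_mem _ hy
          rcases this with h | h
          · exact absurd h (hyne S hy)
          · exact h
        · intro hy
          have : y ∈ insert x0 (Subtype.val '' S) := h1.symm ▸ Set.mem_insert_of_mem _ hy
          rcases this with h | h
          · exact absurd h (hyne T hy)
          · exact h
      exact Set.image_injective.mpr Subtype.val_injective himg


/-- There is a join-preserving embedding of `M_{2^ℵ₀}` into the lattice of local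
clones on the countably infinite set `X`: a family of `2^ℵ₀` pairwise distinct local clones,
each strictly between the clone of projections and the clone of all operations, any two
distinct ones of which join (in the local clone lattice) to the clone of all operations;
explicitly one may take the clones `Pol({A})` for `A` ranging over the nonempty proper
subsets of `X`. -/
theorem joinPreserving_M_continuum (X : Type) [Countable X] [Infinite X] :
    ∃ (ι : Type) (𝒞 : ι → Set (FinOp X)),
      Cardinal.mk ι = 2 ^ Cardinal.aleph0 ∧
      Function.Injective 𝒞 ∧
      (∀ i, IsLocalClone (𝒞 i) ∧ projClone X ⊂ 𝒞 i ∧ 𝒞 i ⊂ Set.univ) ∧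
      (∀ i j, i ≠ j → cllClosure (𝒞 i ∪ 𝒞 j) = Set.univ) ∧
      (∃ A : ι → Set X, Function.Injective A ∧
        Set.range A = {B : Set X | B.Nonempty ∧ B ≠ Set.univ} ∧
        ∀ i, 𝒞 i = unaryPol (A i)) := by
  refine ⟨{B : Set X // B.Nonempty ∧ B ≠ Set.univ}, fun i => unaryPol i.1,
    card_ι X, ?_, ?_, ?_, ⟨Subtype.val, Subtype.val_injective, Subtype.range_coe, fun _ => rfl⟩⟩
  · intro i j hij
    exact Subtype.ext (unaryPol_inj i.2.1 j.2.1 hij)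
  · intro i
    exact ⟨isLocalClone_unaryPol i.1, projClone_ssubset i.2.1, unaryPol_ssubset_univ i.2.1 i.2.2⟩
  · intro i j hij
    apply Set.eq_univ_of_univ_subset
    rintro f -
    rintro C ⟨hCl, hCsub⟩
    have hAi : unaryPol i.1 ⊆ C := (Set.subset_union_left).trans hCsub
    have hAj : unaryPol j.1 ⊆ C := (Set.subset_union_right).trans hCsub
    have hne : i.1 ≠ j.1 := fun h => hij (Subtype.ext h)
    by_cases hsub : i.1 ⊆ j.1
    · obtain ⟨a, haj, hai⟩ := Set.exists_of_ssubset (ssubset_of_subset_of_ne hsub hne)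
      obtain ⟨β, hβ⟩ := i.2.1
      exact key haj hai hβ hCl.1 hAj hAi f
    · obtain ⟨a, hai, haj⟩ := Set.not_subset.mp hsub
      obtain ⟨β, hβ⟩ := j.2.1
      exact key hai haj hβ hCl.1 hAi hAj f
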